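/- Let i, i', i'' be distinct indices with m(i,i') < ∞, m(i,i'') ≥ 3, and m(i',i'') ≥ 3. Then for every integer k with 0 < k < m(i,i') − 1, we have B(α_{i,i'}(k), α_{i''}) ≤ −1, where α_{i,i'}(k) = (sin((k+1)π/m)/sin(π/m))·α_i + (sin(kπ/m)/sin(π/m))·α_{i'} with m = m(i,i'). -/
import Mathlib


open scoped Classical

noncomputable section

namespace BKBilliards

variable {I : Type*} [Fintype I] [DecidableEq I]
variable {M : CoxeterMatrix I} {W : Type*} [Group W]

/-- The simple root indexed by `i`, i.e. the `i`-th standard basis vector of `ℝ^I`. -/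
def sroot (i : I) : I → ℝ := Pi.single i 1

/-- The data `(ρ, B)` constitutes the standard geometric representation of the Coxeter
system `cs`, together with its induced symmetric bilinear form (with `μ = 1` on all
pairs whose Coxeter matrix entry is `∞`, encoded as `0`). -/
structure IsGeometric (cs : CoxeterSystem M W) (ρ : Representation ℝ W (I → ℝ))
    (B : LinearMap.BilinForm ℝ (I → ℝ)) : Prop where
  /-- `B(αᵢ, αᵢ') = -cos (π / m i i')` when `m i i' ≠ ∞`. -/
  form_apply_of_ne_zero : ∀ i i' : I, M i i' ≠ 0 →
    B (sroot i) (sroot i') = - Real.cos (Real.pi / (M i i' : ℝ))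
  /-- `B(αᵢ, αᵢ') = -1` when `m i i' = ∞` (encoded as `0`). -/
  form_apply_of_eq_zero : ∀ i i' : I, M i i' = 0 → B (sroot i) (sroot i') = -1
  /-- Each simple reflection acts by the reflection formula. -/
  simple_apply : ∀ (i : I) (v : I → ℝ), ρ (cs.simple i) v = v - (2 * B v (sroot i)) • sroot i

variable (ρ : Representation ℝ W (I → ℝ))

/-- The root system `Φ = {w αᵢ : w ∈ W, i ∈ I}`. -/
def Phi : Set (I → ℝ) := {v | ∃ (w : W) (i : I), v = ρ w (sroot i)}

/-- The half-space `H_β⁺ = {w ∈ W : w β ∈ Φ⁺}`: for a root `β`, membership amounts to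
`w β` being a nonnegative combination of the simple roots. -/
def Hplus (β : I → ℝ) : Set W := {w : W | 0 ≤ ρ w β}

/-- `R(𝓛) = {β ∈ Φ : 𝓛 ⊆ H_β⁺}`. -/
def RL (L : Set W) : Set (I → ℝ) := {β | β ∈ Phi ρ ∧ ∀ w ∈ L, w ∈ Hplus ρ β}

/-- `𝓛` is convex if it equals the intersection of all half-spaces containing it. -/
def IsConvex (L : Set W) : Prop := ∀ u : W, (∀ β ∈ RL ρ L, u ∈ Hplus ρ β) → u ∈ L

/-- The set of separators of `u`: `Sep(u) = {β ∈ R(𝓛) : u β ∈ Φ⁻}`. -/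
def Sep (L : Set W) (u : W) : Set (I → ℝ) := {β | β ∈ RL ρ L ∧ ρ u β ≤ 0}

variable (cs : CoxeterSystem M W)

/-- The noninvertible Bender–Knuth toggle `τᵢ` associated to the convex set `𝓛`. -/
def toggle (L : Set W) (i : I) (u : W) : W :=
  if ρ u⁻¹ (sroot i) ∈ RL ρ L then u else cs.simple i * u

/-- For a word `𝗐 = i_M ⋯ i_1` (a list whose head is `i_M`), the composition
`τ_𝗐 = τ_{i_M} ⋯ τ_{i_1}`. -/
def toggleWord (L : Set W) (l : List I) (u : W) : W :=
  l.foldr (fun i v => toggle ρ cs L i v) u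

/-- `β` dominates `β'` if `H_β⁺ ⊇ H_{β'}⁺`. -/
def Dominates (β β' : I → ℝ) : Prop := Hplus ρ β' ⊆ Hplus ρ β

/-- A small root: a positive root dominating no positive root other than itself. -/
def IsSmall (β : I → ℝ) : Prop :=
  β ∈ Phi ρ ∧ 0 ≤ β ∧ ∀ β', β' ∈ Phi ρ → 0 ≤ β' → Dominates ρ β β' → β' = β

/-- `β` is a transmitting root of the stratum `Str(R)`:
`β ∈ R(𝓛)` and `β = -w⁻¹ αᵢ` for some `w` with `Sep(w) = R` and some `i ∈ I`. -/
def IsTransmitting (L : Set W) (R : Set (I → ℝ)) (β : I → ℝ) : Prop :=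
  β ∈ RL ρ L ∧ ∃ (w : W) (i : I), Sep ρ L w = R ∧ β = - ρ w⁻¹ (sroot i)

end BKBilliards

open BKBilliards

namespace BKBilliards

/-- The vector `α_{i,i'}(k) = (sin((k+1)π/m)/sin(π/m)) αᵢ + (sin(kπ/m)/sin(π/m)) αᵢ'`. -/
def pairRoot {I : Type*} [Fintype I] [DecidableEq I] (i i' : I) (m : ℕ) (k : ℤ) : I → ℝ :=
  (Real.sin (((k : ℝ) + 1) * Real.pi / (m : ℝ)) / Real.sin (Real.pi / (m : ℝ))) • sroot i +
    (Real.sin ((k : ℝ) * Real.pi / (m : ℝ)) / Real.sin (Real.pi / (m : ℝ))) • sroot i'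

end BKBilliards

/-- For distinct `i, i', i''` with `m(i,i') < ∞` and
`m(i,i''), m(i',i'') ≥ 3` (possibly `∞`), we have `B(α_{i,i'}(k), α_{i''}) ≤ -1`
for `0 < k < m(i,i') - 1`. -/
private lemma sin_ge_aux {x c : Real} (hc : 0 < c) (hcx : c ≤ x) (hx : x ≤ Real.pi - c)
    (hc2 : c ≤ Real.pi / 2) : Real.sin c ≤ Real.sin x := by
  rcases le_or_gt x (Real.pi / 2) with h | h
  · exact Real.strictMonoOn_sin.monotoneOn ⟨by linarith, hc2⟩ ⟨by linarith, h⟩ hcx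
  · rw [← Real.sin_pi_sub x]
    exact Real.strictMonoOn_sin.monotoneOn ⟨by linarith, hc2⟩ ⟨by linarith, by linarith⟩
      (by linarith)

private lemma cos_ge_half {n : ℕ} (hn : 3 ≤ n) : (1 : ℝ) / 2 ≤ Real.cos (Real.pi / n) := by
  have hn' : (3 : ℝ) ≤ (n : ℝ) := by exact_mod_cast hn
  have hπ := Real.pi_pos
  have h1 : Real.pi / n ≤ Real.pi / 3 := by
    apply div_le_div_of_nonneg_left hπ.le (by norm_num) hn'
  have h0 : 0 ≤ Real.pi / n := by positivity
  calc (1 : ℝ) / 2 = Real.cos (Real.pi / 3) := by rw [Real.cos_pi_div_three]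
    _ ≤ Real.cos (Real.pi / n) := Real.cos_le_cos_of_nonneg_of_le_pi h0 (by linarith) h1

theorem form_pairRoot_le_neg_one
    {I : Type*} [Fintype I] [DecidableEq I] {M : CoxeterMatrix I} {W : Type*} [Group W]
    (cs : CoxeterSystem M W) (ρ : Representation ℝ W (I → ℝ))
    (B : LinearMap.BilinForm ℝ (I → ℝ)) (hgeom : IsGeometric cs ρ B)
    (i i' i'' : I) (hne1 : i ≠ i') (hne2 : i ≠ i'') (hne3 : i' ≠ i'')
    (m : ℕ) (hm : M i i' = m) (hmfin : m ≠ 0)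
    (h1 : M i i'' = 0 ∨ 3 ≤ M i i'')
    (h2 : M i' i'' = 0 ∨ 3 ≤ M i' i'') :
    ∀ k : ℤ, 0 < k → k < (m : ℤ) - 1 → B (pairRoot i i' m k) (sroot i'') ≤ -1 := by
  intro k hk0 hk1
  have hπ := Real.pi_pos
  have hm3 : 3 ≤ m := by omega
  have hmR : (3 : ℝ) ≤ (m : ℝ) := by exact_mod_cast hm3
  have hc : 0 < Real.pi / m := by positivity
  have hc2 : Real.pi / m ≤ Real.pi / 2 := by
    apply div_le_div_of_nonneg_left hπ.le (by norm_num) (by linarith)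
  have hs : 0 < Real.sin (Real.pi / m) :=
    Real.sin_pos_of_pos_of_lt_pi hc (by
      rw [div_lt_iff₀ (by linarith : (0:ℝ) < (m:ℝ))]
      nlinarith)
  have hkR1 : (1 : ℝ) ≤ (k : ℝ) := by exact_mod_cast hk0
  have hkR2 : (k : ℝ) ≤ (m : ℝ) - 2 := by
    have h : k ≤ (m : ℤ) - 2 := by omega
    exact_mod_cast h
  -- the two coefficients are ≥ 1
  have key : ∀ t : ℝ, 1 ≤ t → t ≤ (m : ℝ) - 1 →
      1 ≤ Real.sin (t * Real.pi / m) / Real.sin (Real.pi / m) := by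
    intro t ht1 ht2
    rw [le_div_iff₀ hs, one_mul]
    apply sin_ge_aux hc
    · rw [div_le_div_iff₀ (by linarith : (0:ℝ) < (m:ℝ)) (by linarith : (0:ℝ) < (m:ℝ))]
      have := mul_le_mul_of_nonneg_right (mul_le_mul_of_nonneg_right ht1 hπ.le)
        (by linarith : (0:ℝ) ≤ (m:ℝ))
      linarith
    · rw [div_le_iff₀ (by linarith : (0:ℝ) < (m:ℝ)), sub_mul,
        div_mul_cancel₀ _ (by linarith : (m:ℝ) ≠ 0)]
      have := mul_le_mul_of_nonneg_right ht2 hπ.le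
      linarith
    · exact hc2
  have hco1 : 1 ≤ Real.sin (((k : ℝ) + 1) * Real.pi / m) / Real.sin (Real.pi / m) :=
    key _ (by linarith) (by linarith)
  have hco2 : 1 ≤ Real.sin ((k : ℝ) * Real.pi / m) / Real.sin (Real.pi / m) :=
    key _ hkR1 (by linarith)
  -- the two form values are ≤ -1/2
  have hb : ∀ j : I, M j i'' = 0 ∨ 3 ≤ M j i'' → B (sroot j) (sroot i'') ≤ -(1/2) := by
    intro j hj
    rcases hj with hj | hj
    · rw [hgeom.form_apply_of_eq_zero j i'' hj]; norm_num
    · rw [hgeom.form_apply_of_ne_zero j i'' (by omega)]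
      have := cos_ge_half hj
      linarith
  have hb1 := hb i h1
  have hb2 := hb i' h2
  -- expand the bilinear form
  rw [pairRoot, map_add, map_smul, map_smul, LinearMap.add_apply, LinearMap.smul_apply,
    LinearMap.smul_apply, smul_eq_mul, smul_eq_mul]
  set c1 := Real.sin (((k : ℝ) + 1) * Real.pi / m) / Real.sin (Real.pi / m)
  set c2 := Real.sin ((k : ℝ) * Real.pi / m) / Real.sin (Real.pi / m)
  have e1 : c1 * B (sroot i) (sroot i'') ≤ 1 * B (sroot i) (sroot i'') :=
    mul_le_mul_of_nonpos_right hco1 (by linarith)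
  have e2 : c2 * B (sroot i') (sroot i'') ≤ 1 * B (sroot i') (sroot i'') :=
    mul_le_mul_of_nonpos_right hco2 (by linarith)
  linarith
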